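/- Consider a one-layer ReLU network with weight matrix W whose i-th row is w_iᵀ, and a compact input uncertainty set X. For each sign pattern j ∈ {0,1}^{n_z}, define the input part X^(j) = {x ∈ X : w_iᵀx ≥ 0 for all i with j_i = 1, and w_iᵀx < 0 for all i with j_i = 0}, with per-part preactivation bounds l^(j), u^(j) given by l^(j)_i = 0 and u^(j)_i = u_i if j_i = 1, and l^(j)_i = l_i and u^(j)_i = 0 if j_i = 0, where l ≤ 0 ≤ u are bounds valid on X with l < u componentwise. Then the partitioned LP relaxation is exact: f*(X) = max_{j∈{0,1}^{n_z}} f̂*(X^(j); l^(j), u^(j)), where the supremum over an empty part is taken as −∞. -/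

import Mathlib

open Finset Matrix

noncomputable section

/-- Membership of `(x, z)` in the relaxed ReLU network constraint set `N(W, l, u)`.
(In Lean, division by zero is zero, matching the convention that a quotient with a
zero denominator is interpreted as `0`.) -/
def InRelax {nx nz : ℕ} (W : Matrix (Fin nz) (Fin nx) ℝ) (l u : Fin nz → ℝ)
    (x : Fin nx → ℝ) (z : Fin nz → ℝ) : Prop :=
  ∀ i, 0 ≤ z i ∧ W.mulVec x i ≤ z i ∧
    z i ≤ u i * (W.mulVec x i - l i) / (u i - l i)

/-- Values `cᵀ ReLU(Wx)` of the true network over `X`. -/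
def trueVals {nx nz : ℕ} (W : Matrix (Fin nz) (Fin nx) ℝ) (c : Fin nz → ℝ)
    (X : Set (Fin nx → ℝ)) : Set ℝ :=
  {v | ∃ x ∈ X, v = ∑ i, c i * max (W.mulVec x i) 0}

/-- Values `cᵀ z` over the LP relaxation feasible set. -/
def hatVals {nx nz : ℕ} (W : Matrix (Fin nz) (Fin nx) ℝ) (c : Fin nz → ℝ)
    (X : Set (Fin nx → ℝ)) (l u : Fin nz → ℝ) : Set ℝ :=
  {v | ∃ x z, x ∈ X ∧ InRelax W l u x z ∧ v = ∑ i, c i * z i}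

/-- The input part for the sign pattern `s ∈ {0,1}^{n_z}` (encoded as
`s : Fin nz → Bool`). -/
def signPart {nx nz : ℕ} (W : Matrix (Fin nz) (Fin nx) ℝ) (X : Set (Fin nx → ℝ))
    (s : Fin nz → Bool) : Set (Fin nx → ℝ) :=
  {x ∈ X | ∀ i, (s i = true → 0 ≤ W.mulVec x i) ∧ (s i = false → W.mulVec x i < 0)}

/-- Per-part lower preactivation bound: `l⁽ʲ⁾ᵢ = 0` if `jᵢ = 1`, else `lᵢ`. -/
def partL {nz : ℕ} (l : Fin nz → ℝ) (s : Fin nz → Bool) : Fin nz → ℝ :=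
  fun i => if s i then 0 else l i

/-- Per-part upper preactivation bound: `u⁽ʲ⁾ᵢ = uᵢ` if `jᵢ = 1`, else `0`. -/
def partU {nz : ℕ} (u : Fin nz → ℝ) (s : Fin nz → Bool) : Fin nz → ℝ :=
  fun i => if s i then u i else 0

/-- The sign-pattern partitioned LP relaxation is exact:
`f*(X) = max_{j ∈ {0,1}^{n_z}} f̂*(X⁽ʲ⁾; l⁽ʲ⁾, u⁽ʲ⁾)`.  This is expressed by saying
that the attained optimal value `fstar` of the unrelaxed problem is the greatest
element of the union (over all sign patterns) of the relaxed value sets, so that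
empty parts contribute nothing (the `−∞` convention). -/
theorem exact_partitioned_relaxation {nx nz : ℕ}
    (W : Matrix (Fin nz) (Fin nx) ℝ) (c : Fin nz → ℝ)
    (X : Set (Fin nx → ℝ)) (l u : Fin nz → ℝ)
    (hsign : ∀ i, l i ≤ 0 ∧ 0 ≤ u i ∧ l i < u i)
    (hvalid : ∀ x ∈ X, ∀ i, l i ≤ W.mulVec x i ∧ W.mulVec x i ≤ u i)
    (fstar : ℝ) (hfstar : IsGreatest (trueVals W c X) fstar) :
    IsGreatest (⋃ s : Fin nz → Bool,
      hatVals W c (signPart W X s) (partL l s) (partU u s)) fstar := by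
  obtain ⟨⟨x0, hx0, hfx0⟩, hub⟩ := hfstar
  constructor
  · -- fstar is attained in some part
    refine Set.mem_iUnion.2 ⟨fun i => decide (0 ≤ W.mulVec x0 i),
      x0, fun i => max (W.mulVec x0 i) 0, ⟨hx0, ?_⟩, ?_, hfx0⟩
    · intro i
      constructor
      · intro h; exact of_decide_eq_true h
      · intro h
        have := of_decide_eq_false h
        linarith [lt_of_not_ge this]
    · intro i
      refine ⟨le_max_right _ _, le_max_left _ _, ?_⟩
      unfold partL partU
      by_cases hs : 0 ≤ W.mulVec x0 i
      · simp only [hs, decide_true, if_true, sub_zero]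
        rw [max_eq_left hs]
        by_cases hu : u i = 0
        · have h1 := (hvalid x0 hx0 i).2
          have : W.mulVec x0 i = 0 := le_antisymm (hu ▸ h1) hs
          simp [hu, this]
        · rw [mul_div_cancel_left₀ _ hu]
      · simp only [hs, decide_false, if_false]
        rw [max_eq_right (le_of_lt (lt_of_not_ge hs))]
        simp
  · -- upper bound
    intro v hv
    obtain ⟨s, hv⟩ := Set.mem_iUnion.1 hv
    obtain ⟨x, z, ⟨hxX, hxs⟩, hrel, rfl⟩ := hv
    have hz : ∀ i, z i = max (W.mulVec x i) 0 := by
      intro i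
      obtain ⟨h0, hlo, hhi⟩ := hrel i
      cases hsi : s i with
      | true =>
        have hpos : 0 ≤ W.mulVec x i := (hxs i).1 hsi
        rw [max_eq_left hpos]
        refine le_antisymm ?_ hlo
        simp only [partL, partU, hsi, if_true, sub_zero] at hhi
        by_cases hu : u i = 0
        · have h1 := (hvalid x hxX i).2
          have hw0 : W.mulVec x i = 0 := le_antisymm (hu ▸ h1) hpos
          simpa [hu, hw0] using hhi
        · rwa [mul_div_cancel_left₀ _ hu] at hhi
      | false =>
        have hneg : W.mulVec x i < 0 := (hxs i).2 hsi
        rw [max_eq_right (le_of_lt hneg)]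
        refine le_antisymm ?_ h0
        simp only [partL, partU, hsi, if_false] at hhi
        simpa using hhi
    have : (∑ i, c i * z i) ∈ trueVals W c X := by
      refine ⟨x, hxX, ?_⟩
      exact Finset.sum_congr rfl fun i _ => by rw [hz i]
    exact hub this
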